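/- Let π: S → P¹ be a (Z/2)² conic bundle with k singular fibers, whose three nontrivial involutions σ₁, σ₂, σ₃ of Aut(S/P¹) fix hyperelliptic curves C₁, C₂, C₃ ramified over 2a₁, 2a₂, 2a₃ points of P¹ respectively. Then in Pic(S), each C_i is linearly equivalent to −K_S + (a_i − 2)f where f is the fiber class, and C_i² = 4a_i − k. -/
import Mathlib


/-- On a `(ℤ/2)²`-conic bundle `π : S → ℙ¹` with `k` singular fibers, the curve
`Cᵢ` fixed by the involution `σᵢ`, a hyperelliptic curve ramified over `2aᵢ`
points of `ℙ¹` (so of genus `aᵢ - 1`), is linearly equivalent to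
`-K_S + (aᵢ - 2)·f` and satisfies `Cᵢ² = 4aᵢ - k`.
The Picard group is modelled as an abelian group with its (symmetric, bilinear)
intersection form; `C` is invariant, hence lies in `Pic(S)^G = ℤK_S ⊕ ℤf`,
which is recorded by the decomposition `C = α•K + β•f`; the hypotheses
`C·f = 2` and the genus formula `C·(C + K) = 2g - 2 = 2(aᵢ - 1) - 2`
are as in the paper. -/
theorem stmt_10 (Pic : Type) [AddCommGroup Pic]
    (inter : Pic →ₗ[ℤ] Pic →ₗ[ℤ] ℤ)
    (hsymm : ∀ x y, inter x y = inter y x)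
    (K f C : Pic) (k a : ℤ) (ha : 1 ≤ a)
    (hKK : inter K K = 8 - k) (hKf : inter K f = -2) (hff : inter f f = 0)
    (α β : ℤ) (hC : C = α • K + β • f)
    (hCf : inter C f = 2)
    (hgenus : inter C (C + K) = 2 * (a - 1) - 2) :
    C = -K + (a - 2) • f ∧ inter C C = 4 * a - k := by
  have hfK : inter f K = -2 := by rw [hsymm]; exact hKf
  subst hC
  simp only [map_add, map_smul, LinearMap.add_apply, LinearMap.smul_apply, smul_eq_mul,
    hKK, hKf, hff, hfK, mul_zero, add_zero] at hCf hgenus ⊢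
  have hα : α = -1 := by linarith
  subst hα
  have hβ : β = a - 2 := by nlinarith
  subst hβ
  constructor
  · simp [neg_smul, one_smul]
  · ring_nf
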